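/- Conversely, let r₁, r₂, c > 0 with r₁² + r₂² = 1 and a₁, a₂, b₁, b₂ ∈ ℝ with (a₁² − a₂²)r₂² = (b₂² − b₁²)r₁². Define f(u₁) = a₁cosh(r₂√c u₁) + a₂sinh(r₂√c u₁), g(u₂) = b₁cosh(r₁√c u₂) + b₂sinh(r₁√c u₂), Ω = r₁r₂(f+g), W = r₂²f − r₁²g. Then (f'(u₁))² + (g'(u₂))² = c(Ω² + W²) for all (u₁,u₂) ∈ ℝ². -/

import Mathlib

open Real

lemma deriv_aux (a1 a2 k : ℝ) (u : ℝ) :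
    deriv (fun x => a1 * Real.cosh (k * x) + a2 * Real.sinh (k * x)) u =
      k * (a1 * Real.sinh (k * u) + a2 * Real.cosh (k * u)) := by
  have h1 : HasDerivAt (fun x : ℝ => k * x) k u := by
    simpa using (hasDerivAt_id u).const_mul k
  have h2 := ((h1.cosh).const_mul a1).add ((h1.sinh).const_mul a2)
  have h3 : HasDerivAt (fun x => a1 * Real.cosh (k * x) + a2 * Real.sinh (k * x))
      (a1 * (Real.sinh (k * u) * k) + a2 * (Real.cosh (k * u) * k)) u := h2
  simpa [mul_comm, mul_left_comm, mul_add] using h3.deriv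

theorem stmt_8 (r1 r2 c : ℝ) (hr1 : 0 < r1) (hr2 : 0 < r2) (hc : 0 < c)
    (h : r1 ^ 2 + r2 ^ 2 = 1)
    (a1 a2 b1 b2 : ℝ)
    (hab : (a1 ^ 2 - a2 ^ 2) * r2 ^ 2 = (b2 ^ 2 - b1 ^ 2) * r1 ^ 2)
    (f g : ℝ → ℝ) (Ω W : ℝ → ℝ → ℝ)
    (hf : ∀ u1, f u1 = a1 * Real.cosh (r2 * Real.sqrt c * u1) +
        a2 * Real.sinh (r2 * Real.sqrt c * u1))
    (hg : ∀ u2, g u2 = b1 * Real.cosh (r1 * Real.sqrt c * u2) +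
        b2 * Real.sinh (r1 * Real.sqrt c * u2))
    (hΩ : ∀ u1 u2, Ω u1 u2 = r1 * r2 * (f u1 + g u2))
    (hW : ∀ u1 u2, W u1 u2 = r2 ^ 2 * f u1 - r1 ^ 2 * g u2) :
    ∀ u1 u2 : ℝ,
      (deriv f u1) ^ 2 + (deriv g u2) ^ 2 = c * ((Ω u1 u2) ^ 2 + (W u1 u2) ^ 2) := by
  intro u1 u2
  have hfe : f = fun x => a1 * Real.cosh (r2 * Real.sqrt c * x) +
      a2 * Real.sinh (r2 * Real.sqrt c * x) := funext hf
  have hge : g = fun x => b1 * Real.cosh (r1 * Real.sqrt c * x) +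
      b2 * Real.sinh (r1 * Real.sqrt c * x) := funext hg
  have hdf : deriv f u1 = (r2 * Real.sqrt c) *
      (a1 * Real.sinh (r2 * Real.sqrt c * u1) + a2 * Real.cosh (r2 * Real.sqrt c * u1)) := by
    rw [hfe]; exact deriv_aux _ _ _ _
  have hdg : deriv g u2 = (r1 * Real.sqrt c) *
      (b1 * Real.sinh (r1 * Real.sqrt c * u2) + b2 * Real.cosh (r1 * Real.sqrt c * u2)) := by
    rw [hge]; exact deriv_aux _ _ _ _
  have hsc : Real.sqrt c ^ 2 = c := Real.sq_sqrt hc.le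
  have h1 := Real.cosh_sq_sub_sinh_sq (r2 * Real.sqrt c * u1)
  have h2 := Real.cosh_sq_sub_sinh_sq (r1 * Real.sqrt c * u2)
  rw [hdf, hdg, hΩ, hW, hf, hg]
  set s := Real.sqrt c
  set C1 := Real.cosh (r2 * s * u1)
  set S1 := Real.sinh (r2 * s * u1)
  set C2 := Real.cosh (r1 * s * u2)
  set S2 := Real.sinh (r1 * s * u2)
  linear_combination (r2^2*(a1*S1+a2*C1)^2 + r1^2*(b1*S2+b2*C2)^2) * hsc
    + (c*r2^2*(a2^2-a1^2)) * h1 + (c*r1^2*(b2^2-b1^2)) * h2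
    - (c*(r2^2*(a1*C1+a2*S1)^2 + r1^2*(b1*C2+b2*S2)^2)) * h - c * hab
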